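/- Let R be a connected multigraph with distinct vertices u_1,…,u_k and an automorphism ψ with ψ(u_i) = u_{i+1} (indices mod k). Let W be a loopless multigraph with distinct vertices w_1,…,w_k admitting an automorphism ρ such that for some a ∈ [k], ρ(w_{1+s}) = w_{a−s} for all 0 ≤ s ≤ k−1 (indices mod k). Then R(u_1,…,u_k) ⊔ W(w_1,…,w_k) is isomorphic to R(u_k,…,u_1) ⊔ W(w_1,…,w_k). -/

import Mathlib

open scoped BigOperators
open MvPolynomial

attribute [local instance] Classical.propDecidable

/-- A multigraph: finite vertex and edge types, each edge has an unordered
pair of endpoints (loops and parallel edges allowed). -/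
structure Multigraph where
  V : Type
  E : Type
  [fintypeV : Fintype V]
  [fintypeE : Fintype E]
  [decEqV : DecidableEq V]
  [decEqE : DecidableEq E]
  ends : E → Sym2 V

attribute [instance] Multigraph.fintypeV Multigraph.fintypeE
  Multigraph.decEqV Multigraph.decEqE

noncomputable instance quotSetoidFintype {α : Type} [Fintype α] (s : Setoid α) :
    Fintype (Quotient s) := by classical exact Quotient.fintype s

noncomputable instance connCompFintype {α : Type} [Fintype α] (G : SimpleGraph α) :
    Fintype G.ConnectedComponent := by
  classical exact Fintype.ofSurjective G.connectedComponentMk fun c => c.exists_rep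

namespace Multigraph

variable (G : Multigraph)

/-- The simple graph induced by a set of edges `A` (parallel edges and loops
do not affect connectivity). -/
def spanning (A : Finset G.E) : SimpleGraph G.V :=
  SimpleGraph.fromRel (fun a b => ∃ e ∈ A, G.ends e = s(a, b))

/-- number of connected components of the spanning subgraph `(V, A)` -/
noncomputable def comps (A : Finset G.E) : ℕ :=
  Nat.card (G.spanning A).ConnectedComponent

/-- rank of an edge subset: `|V| - c(A)` -/
noncomputable def rk (A : Finset G.E) : ℕ :=
  Fintype.card G.V - G.comps A

/-- The Tutte polynomial, as a polynomial in the variables `X 0 = x`, `X 1 = y`. -/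
noncomputable def tutte : MvPolynomial (Fin 2) ℤ :=
  ∑ A : Finset G.E,
    (X 0 - 1) ^ (G.rk Finset.univ - G.rk A) * (X 1 - 1) ^ (A.card - G.rk A)

def Connected : Prop := (G.spanning Finset.univ).Connected

def IsLoop (e : G.E) : Prop := (G.ends e).IsDiag

def IsBridge (e : G.E) : Prop :=
  G.comps (Finset.univ.erase e) ≠ G.comps Finset.univ

noncomputable def numLoops : ℕ := Nat.card {e : G.E // (G.ends e).IsDiag}

/-- delete a set of edges -/
def deleteSet (F : Finset G.E) : Multigraph where
  V := G.V
  E := {e : G.E // e ∉ F}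
  ends := fun e => G.ends e.1

/-- delete one edge -/
def delete (e : G.E) : Multigraph := G.deleteSet {e}

/-- identify vertices along (the equivalence generated by) a relation `r` -/
noncomputable def identify (r : G.V → G.V → Prop) : Multigraph where
  V := Quotient (Relation.EqvGen.setoid r)
  E := G.E
  decEqV := Classical.decEq _
  ends := fun e => (G.ends e).map (Quotient.mk (Relation.EqvGen.setoid r))

/-- contract an edge: delete it and identify its two endpoints -/
noncomputable def contract (e : G.E) : Multigraph :=
  (G.delete e).identify (fun a b => a ∈ G.ends e ∧ b ∈ G.ends e)

/-- the projection of a vertex of `G` to a vertex of `G/e` -/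
noncomputable def cmk (e : G.E) : G.V → (G.contract e).V := fun v => Quotient.mk _ v

/-- restrict to the edges satisfying `P` (all vertices are kept) -/
noncomputable def edgeRestrict (P : G.E → Prop) : Multigraph where
  V := G.V
  E := {e : G.E // P e}
  ends := fun e => G.ends e.1

/-- add new edges indexed by `n` with prescribed endpoints -/
def addEdges (n : Type) [Fintype n] [DecidableEq n] (f : n → Sym2 G.V) :
    Multigraph where
  V := G.V
  E := G.E ⊕ n
  ends := Sum.elim G.ends f

/-- disjoint union -/
def disjUnion (H : Multigraph) : Multigraph where
  V := G.V ⊕ H.V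
  E := G.E ⊕ H.E
  ends := Sum.elim (fun e => (G.ends e).map Sum.inl) (fun e => (H.ends e).map Sum.inr)

/-- the gluing `G(u_1,…,u_k) ⊔ H(w_1,…,w_k)`: disjoint union with `u i`
identified with `w i` for each `i` -/
noncomputable def glue (H : Multigraph) {k : ℕ} (u : Fin k → G.V) (w : Fin k → H.V) :
    Multigraph :=
  (G.disjUnion H).identify
    (fun a b => ∃ i : Fin k, a = Sum.inl (u i) ∧ b = Sum.inr (w i))

/-- projection from `G.V ⊕ H.V` to the vertices of the gluing -/
noncomputable def glueMk (H : Multigraph) {k : ℕ} (u : Fin k → G.V) (w : Fin k → H.V) :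
    G.V ⊕ H.V → (G.glue H u w).V := fun a => Quotient.mk _ a

end Multigraph

/-- `σ` is an isomorphism of multigraphs: a vertex bijection preserving
edge multiplicities between every pair of vertices. -/
def Multigraph.IsIsoMap (G H : Multigraph) (σ : G.V ≃ H.V) : Prop :=
  ∀ p : Sym2 G.V,
    Nat.card {e : G.E // G.ends e = p} = Nat.card {e : H.E // H.ends e = p.map σ}

/-- `G` and `H` are isomorphic multigraphs -/
def Multigraph.Iso (G H : Multigraph) : Prop := ∃ σ : G.V ≃ H.V, G.IsIsoMap H σ

/-- `σ` is an automorphism of `G` -/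
def Multigraph.IsAuto (G : Multigraph) (σ : G.V ≃ G.V) : Prop := G.IsIsoMap G σ

/-- `Q` is a partition of the type `α` -/
def IsPartitionUniv {α : Type} (Q : Finset (Finset α)) : Prop :=
  (∀ B ∈ Q, B.Nonempty) ∧ ∀ i : α, ∃! B, B ∈ Q ∧ i ∈ B

section AuxLemmas

open Relation

private lemma eqvGen_congr_forward {α β : Type*} (e : α → β) (r : α → α → Prop)
    (r' : β → β → Prop) (h : ∀ a b, r a b → r' (e a) (e b)) {a b : α}
    (hab : Relation.EqvGen r a b) : Relation.EqvGen r' (e a) (e b) := by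
  induction hab with
  | rel x y hxy => exact .rel _ _ (h x y hxy)
  | refl x => exact .refl _
  | symm x y _ ih => exact .symm _ _ ih
  | trans x y z _ _ ih1 ih2 => exact .trans _ _ _ ih1 ih2

private lemma eqvGen_congr {α β : Type*} (e : α ≃ β) (r : α → α → Prop)
    (r' : β → β → Prop) (h : ∀ a b, r a b ↔ r' (e a) (e b)) (a b : α) :
    Relation.EqvGen r a b ↔ Relation.EqvGen r' (e a) (e b) := by
  constructor
  · exact eqvGen_congr_forward e r r' (fun a b hab => (h a b).1 hab)
  · intro hab
    have key : ∀ a b, r' a b → r (e.symm a) (e.symm b) := by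
      intro a b hab'
      exact (h _ _).2 (by simpa using hab')
    have := eqvGen_congr_forward e.symm r' r key hab
    simpa using this

private lemma card_subtype_sum {A B : Type} [Fintype A] [Fintype B] (P : A ⊕ B → Prop) :
    Nat.card {x : A ⊕ B // P x} =
      Nat.card {a // P (Sum.inl a)} + Nat.card {b // P (Sum.inr b)} := by
  rw [Nat.card_congr (Equiv.subtypeSum (p := P))]
  exact Nat.card_sum

private lemma card_fiberwise {γ δ : Type} [Fintype γ] [Fintype δ] [DecidableEq γ]
    [DecidableEq δ] (F : γ → δ) (P : δ → Prop) [DecidablePred P] :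
    Nat.card {e // P (F e)} = ∑ p ∈ Finset.univ.filter P, Nat.card {e // F e = p} := by
  classical
  rw [Nat.card_eq_fintype_card, Fintype.card_subtype]
  rw [Finset.card_eq_sum_card_fiberwise (f := F) (t := Finset.univ.filter P)
    (by intro e he; simp only [Finset.mem_coe, Finset.mem_filter, Finset.mem_univ, true_and] at he ⊢; exact he)]
  refine Finset.sum_congr rfl fun p hp => ?_
  rw [Nat.card_eq_fintype_card, Fintype.card_subtype]
  congr 1
  ext e
  simp only [Finset.mem_filter, Finset.mem_univ, true_and] at hp ⊢
  constructor
  · rintro ⟨_, h⟩; exact h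
  · rintro rfl; exact ⟨hp, rfl⟩

private lemma card_fiber_map {E E' α α' β β' : Type} [Fintype E] [Fintype E']
    [Fintype α] [Fintype α'] [DecidableEq E] [DecidableEq E'] [DecidableEq α]
    [DecidableEq α'] [DecidableEq β] [DecidableEq β']
    (f : E → Sym2 α) (f' : E' → Sym2 α') (σ : α ≃ α')
    (hσ : ∀ p : Sym2 α, Nat.card {e // f e = p} = Nat.card {e' // f' e' = p.map σ})
    (g : α → β) (g' : α' → β') (τ : β ≃ β')
    (hcomm : ∀ v, g' (σ v) = τ (g v)) (q : Sym2 β) :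
    Nat.card {e // (f e).map g = q} = Nat.card {e' // (f' e').map g' = q.map τ} := by
  classical
  have hcomp : ∀ p : Sym2 α, (p.map σ).map g' = (p.map g).map τ := by
    intro p
    rw [Sym2.map_map, Sym2.map_map]
    congr 1
    funext v
    exact hcomm v
  rw [card_fiberwise f (fun p => p.map g = q),
      card_fiberwise f' (fun p => p.map g' = q.map τ)]
  refine Finset.sum_nbij' (fun p => p.map σ) (fun p' => p'.map σ.symm) ?_ ?_ ?_ ?_ ?_
  · intro p hp
    simp only [Finset.mem_filter, Finset.mem_univ, true_and] at hp ⊢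
    rw [hcomp, hp]
  · intro p' hp'
    simp only [Finset.mem_filter, Finset.mem_univ, true_and] at hp' ⊢
    have h1 : (p'.map σ.symm).map σ = p' := by
      rw [Sym2.map_map]
      have h0 : (⇑σ ∘ ⇑σ.symm) = id := by funext v; simp
      rw [h0]
      exact congrFun Sym2.map_id p'
    have h2 := hcomp (p'.map σ.symm)
    rw [h1, hp'] at h2
    exact Sym2.map.injective τ.injective h2.symm
  · intro p _
    show Sym2.map (⇑σ.symm) (Sym2.map (⇑σ) p) = p
    rw [Sym2.map_map]
    have h0 : (⇑σ.symm ∘ ⇑σ) = id := by funext v; simp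
    rw [h0]
    exact congrFun Sym2.map_id p
  · intro p' _
    show Sym2.map (⇑σ) (Sym2.map (⇑σ.symm) p') = p'
    rw [Sym2.map_map]
    have h0 : (⇑σ ∘ ⇑σ.symm) = id := by funext v; simp
    rw [h0]
    exact congrFun Sym2.map_id p'
  · intro p _
    exact hσ p

private lemma card_map_eq_map {E α β : Type} [Fintype E] (f : E → Sym2 α) (g : α → β)
    (hg : Function.Injective g) (q : Sym2 α) :
    Nat.card {e // (f e).map g = q.map g} = Nat.card {e // f e = q} :=
  Nat.card_congr (Equiv.subtypeEquivRight fun e =>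
    ⟨fun h => Sym2.map.injective hg h, fun h => by rw [h]⟩)

private lemma card_map_ne {E α β : Type} [Fintype E] (f : E → Sym2 α) (g : α → β)
    (q : Sym2 β) (hq : ∃ x ∈ q, ∀ v, g v ≠ x) :
    Nat.card {e // (f e).map g = q} = 0 := by
  have : IsEmpty {e // (f e).map g = q} := by
    constructor
    rintro ⟨e, he⟩
    obtain ⟨x, hx, hgx⟩ := hq
    rw [← he] at hx
    obtain ⟨v, _, hv⟩ := Sym2.mem_map.mp hx
    exact hgx v hv
  exact Nat.card_of_isEmpty

private lemma isIsoMap_trans {G H K : Multigraph} {σ : G.V ≃ H.V} {τ : H.V ≃ K.V}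
    (hσ : G.IsIsoMap H σ) (hτ : H.IsIsoMap K τ) : G.IsIsoMap K (σ.trans τ) := by
  intro p
  rw [hσ p, hτ (p.map σ), Sym2.map_map, ← Equiv.coe_trans]

private lemma isAuto_pow (G : Multigraph) (ψ : G.V ≃ G.V) (hψ : G.IsAuto ψ) (n : ℕ) :
    G.IsAuto (ψ ^ n) := by
  induction n with
  | zero =>
    intro p
    simp [Equiv.Perm.coe_one, Sym2.map_id]
  | succ m ih =>
    have hpow : (ψ ^ (m + 1) : G.V ≃ G.V) = ψ.trans (ψ ^ m) := by
      ext x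
      simp [pow_succ, Equiv.Perm.mul_apply]
    rw [Multigraph.IsAuto, hpow]
    exact isIsoMap_trans hψ ih

open Fin.NatCast Fin.CommRing in
private lemma pow_rot {k : ℕ} [NeZero k] {R : Multigraph} (u : Fin k → R.V)
    (ψ : R.V ≃ R.V) (hrot : ∀ i : Fin k, ψ (u i) = u (i + 1)) (n : ℕ) (i : Fin k) :
    (ψ ^ n) (u i) = u (i + (n : Fin k)) := by
  induction n generalizing i with
  | zero => simp
  | succ m ih =>
    have h1 : (ψ ^ (m + 1)) (u i) = (ψ ^ m) (ψ (u i)) := by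
      rw [pow_succ]; rfl
    rw [h1, hrot, ih (i + 1)]
    congr 1
    push_cast
    ring

open Fin.NatCast Fin.CommRing in
private lemma fin_rev_eq {k : ℕ} [NeZero k] (j : Fin k) : Fin.rev j = -j - 1 := by
  rcases k with _ | k
  · exact absurd rfl (NeZero.ne 0)
  · rw [← Fin.last_sub]
    have hlast : (Fin.last k) = -1 := by
      ext
      rw [Fin.coe_neg_one]
      rfl
    rw [hlast]
    ring

private lemma isIsoMap_disjUnion (G G' H H' : Multigraph) (σ : G.V ≃ G'.V)
    (τ : H.V ≃ H'.V) (hσ : G.IsIsoMap G' σ) (hτ : H.IsIsoMap H' τ) :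
    (G.disjUnion H).IsIsoMap (G'.disjUnion H') (Equiv.sumCongr σ τ) := by
  classical
  intro p
  induction p using Sym2.ind with
  | _ x y =>
  have L := card_subtype_sum (fun e : G.E ⊕ H.E => (G.disjUnion H).ends e = s(x, y))
  have Rr := card_subtype_sum (fun e : G'.E ⊕ H'.E =>
      (G'.disjUnion H').ends e = (s(x, y)).map (Equiv.sumCongr σ τ))
  refine L.trans (Eq.trans ?_ Rr.symm)
  simp only [Multigraph.disjUnion, Sum.elim_inl, Sum.elim_inr, Sym2.map_pair_eq,
    Equiv.sumCongr_apply]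
  rcases x with xa | xb <;> rcases y with ya | yb
  · -- both inl
    have e1 : s(Sum.inl xa, Sum.inl ya) =
        (s(xa, ya) : Sym2 G.V).map (Sum.inl : G.V → G.V ⊕ H.V) :=
      (Sym2.map_pair_eq _ _ _).symm
    have e2 : Sym2.map (fun x => Sum.map (⇑σ) (⇑τ) x) (Sym2.map Sum.inl s(xa, ya)) =
        ((s(xa, ya) : Sym2 G.V).map σ).map Sum.inl := by
      rw [Sym2.map_map, Sym2.map_map]
      rfl
    rw [e1, e2, card_map_eq_map _ _ Sum.inl_injective, card_map_eq_map _ _ Sum.inl_injective,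
      card_map_ne (H.ends) _ _ ⟨Sum.inl xa, by simp [Sym2.mem_map],
        fun v => by simp⟩,
      card_map_ne (H'.ends) _ _ ⟨Sum.inl (σ xa), by simp [Sym2.mem_map],
        fun v => by simp⟩]
    rw [hσ s(xa, ya)]
  · -- inl, inr : both sides empty
    rw [card_map_ne (G.ends) _ _ ⟨Sum.inr yb, by simp, fun v => by simp⟩,
      card_map_ne (H.ends) _ _ ⟨Sum.inl xa, by simp, fun v => by simp⟩,
      card_map_ne (G'.ends) _ _ ⟨Sum.inr (τ yb), by simp, fun v => by simp⟩,
      card_map_ne (H'.ends) _ _ ⟨Sum.inl (σ xa), by simp, fun v => by simp⟩]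
  · -- inr, inl : both sides empty
    rw [card_map_ne (G.ends) _ _ ⟨Sum.inr xb, by simp, fun v => by simp⟩,
      card_map_ne (H.ends) _ _ ⟨Sum.inl ya, by simp, fun v => by simp⟩,
      card_map_ne (G'.ends) _ _ ⟨Sum.inr (τ xb), by simp, fun v => by simp⟩,
      card_map_ne (H'.ends) _ _ ⟨Sum.inl (σ ya), by simp, fun v => by simp⟩]
  · -- both inr
    have e1 : s(Sum.inr xb, Sum.inr yb) =
        (s(xb, yb) : Sym2 H.V).map (Sum.inr : H.V → G.V ⊕ H.V) :=
      (Sym2.map_pair_eq _ _ _).symm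
    have e2 : Sym2.map (fun x => Sum.map (⇑σ) (⇑τ) x) (Sym2.map Sum.inr s(xb, yb)) =
        ((s(xb, yb) : Sym2 H.V).map τ).map Sum.inr := by
      rw [Sym2.map_map, Sym2.map_map]
      rfl
    rw [e1, e2, card_map_eq_map _ _ Sum.inr_injective, card_map_eq_map _ _ Sum.inr_injective,
      card_map_ne (G.ends) _ _ ⟨Sum.inr xb, by simp [Sym2.mem_map],
        fun v => by simp⟩,
      card_map_ne (G'.ends) _ _ ⟨Sum.inr (τ xb), by simp [Sym2.mem_map],
        fun v => by simp⟩]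
    rw [hτ s(xb, yb)]

private lemma iso_identify (G H : Multigraph) (σ : G.V ≃ H.V) (hσ : G.IsIsoMap H σ)
    (r : G.V → G.V → Prop) (r' : H.V → H.V → Prop)
    (h : ∀ x y, Relation.EqvGen r x y ↔ Relation.EqvGen r' (σ x) (σ y)) :
    (G.identify r).Iso (H.identify r') := by
  classical
  refine ⟨Quotient.congr σ h, ?_⟩
  intro q
  exact card_fiber_map G.ends H.ends σ hσ
    (Quotient.mk (Relation.EqvGen.setoid r)) (Quotient.mk (Relation.EqvGen.setoid r'))
    (Quotient.congr σ h) (fun v => (Quotient.congr_mk σ h v).symm) q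

end AuxLemmas

/-- if `W` admits a "reflection" automorphism on the border, then
flipping the rotor `R` yields an isomorphic graph. -/
theorem stmt_10 {k : ℕ} [NeZero k] (R W : Multigraph)
    (u : Fin k → R.V) (w : Fin k → W.V)
    (hu : Function.Injective u) (hw : Function.Injective w)
    (hR : R.Connected)
    (ψ : R.V ≃ R.V) (hψ : R.IsAuto ψ) (hrot : ∀ i : Fin k, ψ (u i) = u (i + 1))
    (hWl : ∀ e : W.E, ¬ (W.ends e).IsDiag)
    (ρ : W.V ≃ W.V) (hρ : W.IsAuto ρ) (a : Fin k)
    (hrefl : ∀ s : Fin k, ρ (w s) = w (a - s)) :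
    Multigraph.Iso (R.glue W u w) (R.glue W (fun i => u (Fin.rev i)) w) := by
  classical
  set c : Fin k := -a - 1 with hc
  set n : ℕ := c.val with hn
  have hpow : ∀ i : Fin k, (ψ ^ n) (u i) = u (i + c) := by
    intro i
    rw [pow_rot u ψ hrot n i, hn, Fin.cast_val_eq_self]
  have hψn : R.IsAuto (ψ ^ n) := isAuto_pow R ψ hψ n
  set σ₀ : (R.V ⊕ W.V) ≃ (R.V ⊕ W.V) := Equiv.sumCongr (ψ ^ n) ρ with hσ₀
  have hd : (R.disjUnion W).IsIsoMap (R.disjUnion W) σ₀ :=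
    isIsoMap_disjUnion R R W W (ψ ^ n) ρ hψn hρ
  have key : ∀ x y : R.V ⊕ W.V,
      (∃ i : Fin k, x = Sum.inl (u i) ∧ y = Sum.inr (w i)) ↔
      (∃ i : Fin k, σ₀ x = Sum.inl ((fun i => u (Fin.rev i)) i) ∧ σ₀ y = Sum.inr (w i)) := by
    intro x y
    constructor
    · rintro ⟨i, rfl, rfl⟩
      refine ⟨a - i, ?_, ?_⟩
      · have h3 : (ψ ^ n) (u i) = u (Fin.rev (a - i)) := by
          rw [hpow, fin_rev_eq, hc]
          congr 1
          open Fin.CommRing in ring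
        simp [hσ₀, h3]
      · simp [hσ₀, hrefl]
    · rintro ⟨j, h1, h2⟩
      cases x with
      | inr xw => simp [hσ₀] at h1
      | inl xr =>
        cases y with
        | inl yr => simp [hσ₀] at h2
        | inr yw =>
          simp only [hσ₀, Equiv.sumCongr_apply, Sum.map_inl, Sum.map_inr,
            Sum.inl.injEq, Sum.inr.injEq] at h1 h2
          refine ⟨a - j, ?_, ?_⟩
          · have h3 : (ψ ^ n) (u (a - j)) = u (Fin.rev j) := by
              rw [hpow, fin_rev_eq, hc]
              congr 1
              open Fin.CommRing in ring
            have h4 := (ψ ^ n).injective (h1.trans h3.symm)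
            simp [h4]
          · have h5 : ρ (w (a - j)) = w j := by
              rw [hrefl]
              congr 1
              open Fin.CommRing in ring
            have h6 := ρ.injective (h2.trans h5.symm)
            simp [h6]
  have hEq := eqvGen_congr σ₀
    (fun x y => ∃ i : Fin k, x = Sum.inl (u i) ∧ y = Sum.inr (w i))
    (fun x y => ∃ i : Fin k, x = Sum.inl ((fun i => u (Fin.rev i)) i) ∧ y = Sum.inr (w i))
    key
  exact iso_identify (R.disjUnion W) (R.disjUnion W) σ₀ hd _ _ hEq
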